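/- Let K : ℝ³ → ℝ satisfy |K(z)| ≤ [(1+|z|)(1+s(z))]^{-3/2} for all z, and suppose g : ℝ³ → ℝ satisfies |g(y)| ≤ M[(1+|y|)(1+s(y))]^{-5/2}. Then for |x| ≥ 2, the integral ∫_{B_2(x)} |K(x−y)||g(y)| dy ≤ C M [(1+|x|)(1+s(x))]^{-5/2}, with C an absolute constant (for fixed λ = 1). -/

import Mathlib

open MeasureTheory Metric

lemma coord_abs_le_norm (z : EuclideanSpace ℝ (Fin 3)) : |z 0| ≤ ‖z‖ := by
  rw [EuclideanSpace.norm_eq]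
  have h : |z 0| = Real.sqrt (‖z 0‖ ^ 2) := by
    rw [Real.sqrt_sq_eq_abs, Real.norm_eq_abs, abs_abs]
  rw [h]
  apply Real.sqrt_le_sqrt
  exact Finset.single_le_sum (f := fun i => ‖z i‖ ^ 2)
    (fun i _ => by positivity) (Finset.mem_univ 0)

lemma s_nonneg (z : EuclideanSpace ℝ (Fin 3)) : 0 ≤ ‖z‖ + z 0 := by
  have := coord_abs_le_norm z
  cases abs_le.mp this with
  | intro h1 h2 => linarith

theorem local_conv_estimate :
    ∃ C > 0, ∀ (M : ℝ) (K g : EuclideanSpace ℝ (Fin 3) → ℝ),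
      Measurable K → Measurable g →
      (∀ z, |K z| ≤ ((1 + ‖z‖) * (1 + (‖z‖ + z 0))) ^ (-(3 / 2 : ℝ))) →
      (∀ y, |g y| ≤ M * ((1 + ‖y‖) * (1 + (‖y‖ + y 0))) ^ (-(5 / 2 : ℝ))) →
      ∀ x : EuclideanSpace ℝ (Fin 3), 2 ≤ ‖x‖ →
        (∫ y in Metric.ball x 2, |K (x - y)| * |g y|)
          ≤ C * M * ((1 + ‖x‖) * (1 + (‖x‖ + x 0))) ^ (-(5 / 2 : ℝ)) := by
  set ν : ℝ := (volume (ball (0 : EuclideanSpace ℝ (Fin 3)) 2)).toReal with hν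
  have hν0 : 0 < ν := ENNReal.toReal_pos (measure_ball_pos _ _ (by norm_num)).ne'
    measure_ball_lt_top.ne
  refine ⟨(15 : ℝ) ^ ((5 : ℝ) / 2) * ν, by positivity, ?_⟩
  intro M K g hK hg hKb hgb x hx
  set A : ℝ := ((1 + ‖x‖) * (1 + (‖x‖ + x 0))) ^ (-(5 / 2 : ℝ)) with hA
  have hbx : (0 : ℝ) < (1 + ‖x‖) * (1 + (‖x‖ + x 0)) := by
    have := s_nonneg x; have := norm_nonneg x; positivity
  have hApos : 0 < A := Real.rpow_pos_of_pos hbx _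
  have hM : 0 ≤ M := by
    have h0 := hgb 0
    have hb0 : (0 : ℝ) < (1 + ‖(0 : EuclideanSpace ℝ (Fin 3))‖) *
        (1 + (‖(0 : EuclideanSpace ℝ (Fin 3))‖ + (0 : EuclideanSpace ℝ (Fin 3)) 0)) := by
      have := s_nonneg (0 : EuclideanSpace ℝ (Fin 3)); positivity
    nlinarith [abs_nonneg (g 0), Real.rpow_pos_of_pos hb0 (-(5 / 2 : ℝ))]
  -- pointwise bound on the ball
  have key : ∀ y ∈ ball x 2, ‖|K (x - y)| * |g y|‖ ≤ M * ((15 : ℝ) ^ ((5 : ℝ) / 2) * A) := by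
    intro y hy
    rw [Real.norm_eq_abs, abs_mul, abs_abs, abs_abs]
    have hdist : ‖x - y‖ < 2 := by
      rw [mem_ball, dist_eq_norm] at hy
      rw [norm_sub_rev]; exact hy
    -- bound on K
    have hKle : |K (x - y)| ≤ 1 := by
      refine (hKb (x - y)).trans ?_
      apply Real.rpow_le_one_of_one_le_of_nonpos
      · have h1 := s_nonneg (x - y); have h2 := norm_nonneg (x - y); nlinarith
      · norm_num
    -- bound on g
    have hby : (0 : ℝ) < (1 + ‖y‖) * (1 + (‖y‖ + y 0)) := by
      have := s_nonneg y; have := norm_nonneg y; positivity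
    have hcomp : (1 + ‖x‖) * (1 + (‖x‖ + x 0)) ≤ 15 * ((1 + ‖y‖) * (1 + (‖y‖ + y 0))) := by
      have h1 : ‖x‖ ≤ ‖y‖ + 2 := by
        have := norm_sub_norm_le x y; linarith
      have h2 : x 0 ≤ y 0 + 2 := by
        have h3 : |(x - y) 0| ≤ ‖x - y‖ := coord_abs_le_norm (x - y)
        have h4 : (x - y) 0 = x 0 - y 0 := rfl
        cases abs_le.mp h3 with
        | intro ha hb => rw [h4] at hb; linarith
      have hsy := s_nonneg y
      have hny := norm_nonneg y
      nlinarith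
    have hgle : |g y| ≤ M * ((15 : ℝ) ^ ((5 : ℝ) / 2) * A) := by
      refine (hgb y).trans ?_
      refine mul_le_mul_of_nonneg_left ?_ hM
      have hdiv : (1 + ‖x‖) * (1 + (‖x‖ + x 0)) / 15 ≤ (1 + ‖y‖) * (1 + (‖y‖ + y 0)) := by
        linarith
      have h5 : ((1 + ‖y‖) * (1 + (‖y‖ + y 0))) ^ (-(5 / 2 : ℝ)) ≤
          ((1 + ‖x‖) * (1 + (‖x‖ + x 0)) / 15) ^ (-(5 / 2 : ℝ)) :=
        Real.rpow_le_rpow_of_nonpos (by positivity) hdiv (by norm_num)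
      refine h5.trans_eq ?_
      rw [Real.div_rpow hbx.le (by norm_num), hA, div_eq_mul_inv,
        ← Real.rpow_neg (by norm_num : (0:ℝ) ≤ 15), neg_neg, mul_comm]
    calc |K (x - y)| * |g y| ≤ 1 * (M * ((15 : ℝ) ^ ((5 : ℝ) / 2) * A)) := by
          apply mul_le_mul hKle hgle (abs_nonneg _) (by norm_num)
      _ = M * ((15 : ℝ) ^ ((5 : ℝ) / 2) * A) := one_mul _
  have hmeas : AEStronglyMeasurable (fun y => |K (x - y)| * |g y|)
      (volume.restrict (ball x 2)) := by
    apply Measurable.aestronglyMeasurable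
    exact ((hK.comp (measurable_const.sub measurable_id)).abs.mul hg.abs)
  have hmain := norm_setIntegral_le_of_norm_le_const (μ := volume)
    measure_ball_lt_top key
  have hvol : (volume (ball x 2)).toReal = ν := by
    rw [hν, Measure.addHaar_ball_center]
  calc (∫ y in ball x 2, |K (x - y)| * |g y|)
      ≤ ‖∫ y in ball x 2, |K (x - y)| * |g y|‖ := le_abs_self _
    _ ≤ M * ((15 : ℝ) ^ ((5 : ℝ) / 2) * A) * (volume (ball x 2)).toReal := hmain
    _ = (15 : ℝ) ^ ((5 : ℝ) / 2) * ν * M * A := by rw [hvol]; ring
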